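/- For a finite set {A₁,…,Aₙ} of compatible observables, every joint observable G of A₁,…,Aₙ is lower bounded in the post-processing order by a minimal joint observable, and upper bounded by a maximal joint observable. (A joint observable M is minimal if every joint observable G' with G' ⪯ M satisfies M ⪯ G'; maximal is defined dually.) -/

import Mathlib

set_option linter.unusedSectionVars false

noncomputable section

open scoped BigOperators

variable {H : Type*} [NormedAddCommGroup H] [InnerProductSpace ℂ H] [CompleteSpace H]

/-- A Markov kernel from `Ω₂` to `Ω₁`: nonnegative entries, columns summing to 1. -/
def IsMarkov {Ω₁ Ω₂ : Type*} [Fintype Ω₁] (p : Ω₁ → Ω₂ → ℝ) : Prop :=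
  (∀ x y, 0 ≤ p x y) ∧ ∀ y, ∑ x, p x y = 1

/-- A finite-outcome observable (POVM): positive operators summing to the identity. -/
def IsObservable {Ω : Type*} [Fintype Ω] (A : Ω → H →L[ℂ] H) : Prop :=
  (∀ x, (A x).IsPositive) ∧ ∑ x, A x = 1

/-- Post-processing of `A` by the kernel `p`. -/
def pproc {Ω₁ Ω₂ : Type*} [Fintype Ω₂] (p : Ω₁ → Ω₂ → ℝ) (A : Ω₂ → H →L[ℂ] H) :
    Ω₁ → H →L[ℂ] H := fun x => ∑ y, (p x y : ℂ) • A y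

/-- `A ⪯ B` : `A` is a post-processing of `B`. -/
def PP {Ω₁ Ω₂ : Type*} [Fintype Ω₁] [Fintype Ω₂] (A : Ω₁ → H →L[ℂ] H)
    (B : Ω₂ → H →L[ℂ] H) : Prop := ∃ p, IsMarkov p ∧ A = pproc p B

/-- `G` is a joint observable of the observables `A ℓ`. -/
def IsJoint {n : ℕ} {Ω : Fin n → Type*} [∀ ℓ, Fintype (Ω ℓ)] [∀ ℓ, DecidableEq (Ω ℓ)]
    (A : ∀ ℓ, Ω ℓ → H →L[ℂ] H) (G : (∀ ℓ, Ω ℓ) → H →L[ℂ] H) : Prop :=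
  IsObservable G ∧ ∀ ℓ xℓ, (∑ x : ∀ ℓ, Ω ℓ, if x ℓ = xℓ then G x else 0) = A ℓ xℓ

/-! ### Auxiliary material -/

namespace JointAux

local notation "⟪" x ", " y "⟫" => @inner ℂ _ _ x y

section basics

variable {Ω Ω₁ Ω₂ Ω₃ : Type*} [Fintype Ω] [Fintype Ω₁] [Fintype Ω₂] [Fintype Ω₃]

/-- identity kernel -/
def idk (Ω : Type*) [DecidableEq Ω] : Ω → Ω → ℝ := fun x y => if x = y then 1 else 0

lemma isMarkov_idk [DecidableEq Ω] : IsMarkov (idk Ω) := by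
  constructor
  · intro x y; unfold idk; split <;> norm_num
  · intro y; simp [idk]

lemma pproc_idk [DecidableEq Ω] (B : Ω → H →L[ℂ] H) : pproc (idk Ω) B = B := by
  funext x
  simp [pproc, idk, apply_ite (fun r : ℝ => (r : ℂ)), ite_smul]

lemma PP.refl [DecidableEq Ω] (B : Ω → H →L[ℂ] H) : PP B B :=
  ⟨idk Ω, isMarkov_idk, (pproc_idk B).symm⟩

/-- composition of kernels -/
def kcomp (p : Ω₁ → Ω₂ → ℝ) (q : Ω₂ → Ω₃ → ℝ) [Fintype Ω₂] : Ω₁ → Ω₃ → ℝ :=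
  fun x z => ∑ y, p x y * q y z

lemma isMarkov_kcomp {p : Ω₁ → Ω₂ → ℝ} {q : Ω₂ → Ω₃ → ℝ}
    (hp : IsMarkov p) (hq : IsMarkov q) : IsMarkov (kcomp p q) := by
  constructor
  · intro x z
    exact Finset.sum_nonneg fun y _ => mul_nonneg (hp.1 x y) (hq.1 y z)
  · intro z
    unfold kcomp
    rw [Finset.sum_comm]
    calc ∑ y : Ω₂, ∑ x : Ω₁, p x y * q y z = ∑ y, (∑ x, p x y) * q y z := by
          simp [Finset.sum_mul]
      _ = ∑ y, q y z := by simp [hp.2]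
      _ = 1 := hq.2 z

lemma pproc_pproc (p : Ω₁ → Ω₂ → ℝ) (q : Ω₂ → Ω₃ → ℝ) (B : Ω₃ → H →L[ℂ] H) :
    pproc p (pproc q B) = pproc (kcomp p q) B := by
  funext x
  simp only [pproc, kcomp, Finset.smul_sum, smul_smul]
  rw [Finset.sum_comm]
  refine Finset.sum_congr rfl fun z _ => ?_
  rw [← Finset.sum_smul]
  congr 1
  push_cast
  rfl

lemma PP.trans {A : Ω₁ → H →L[ℂ] H} {B : Ω₂ → H →L[ℂ] H} {C : Ω₃ → H →L[ℂ] H}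
    (h₁ : PP A B) (h₂ : PP B C) : PP A C := by
  obtain ⟨p, hp, rfl⟩ := h₁
  obtain ⟨q, hq, rfl⟩ := h₂
  exact ⟨kcomp p q, isMarkov_kcomp hp hq, pproc_pproc p q C⟩

end basics

end JointAux

namespace JointAux

local notation "⟪" x ", " y "⟫" => @inner ℂ _ _ x y

section forms

variable {Ω Ω₁ Ω₂ Ω₃ : Type*} [Fintype Ω] [Fintype Ω₁] [Fintype Ω₂] [Fintype Ω₃]

/-- The sesquilinear-form picture of a family of operators. -/
def toForm (B : Ω → H →L[ℂ] H) : Ω → H → H → ℂ := fun x v w => ⟪v, B x w⟫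

lemma toForm_injective : Function.Injective (toForm (H := H) (Ω := Ω)) := by
  intro B C h
  funext x
  ext w
  refine ext_inner_left ℂ fun v => ?_
  exact congrFun (congrFun (congrFun h x) v) w

/-- Post-processing on the level of forms. -/
def kproc (p : Ω₁ → Ω₂ → ℝ) (f : Ω₂ → H → H → ℂ) : Ω₁ → H → H → ℂ :=
  fun x v w => ∑ y, (p x y : ℂ) * f y v w

lemma toForm_pproc (p : Ω₁ → Ω₂ → ℝ) (B : Ω₂ → H →L[ℂ] H) :
    toForm (pproc p B) = kproc p (toForm B) := by
  funext x v w
  simp only [toForm, kproc, pproc, ContinuousLinearMap.sum_apply, inner_sum,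
    ContinuousLinearMap.smul_apply]
  exact Finset.sum_congr rfl fun y _ => inner_smul_right _ _ _

lemma kproc_kproc (p : Ω₁ → Ω₂ → ℝ) (q : Ω₂ → Ω₃ → ℝ) (f : Ω₃ → H → H → ℂ) :
    kproc p (kproc q f) = kproc (kcomp p q) f := by
  funext x v w
  simp only [kproc, kcomp, Finset.mul_sum]
  rw [Finset.sum_comm]
  refine Finset.sum_congr rfl fun z _ => ?_
  push_cast
  rw [Finset.sum_mul]
  exact Finset.sum_congr rfl fun y _ => by ring

lemma continuous_kproc :
    Continuous (fun pf : (Ω₁ → Ω₂ → ℝ) × (Ω₂ → H → H → ℂ) => kproc pf.1 pf.2) := by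
  refine continuous_pi fun x => continuous_pi fun v => continuous_pi fun w => ?_
  refine continuous_finset_sum _ fun y _ => Continuous.mul ?_ ?_
  · exact Complex.continuous_ofReal.comp ((continuous_apply_apply x y).comp continuous_fst)
  · have : Continuous fun f : Ω₂ → H → H → ℂ => f y v w :=
      (continuous_apply w).comp (continuous_apply_apply y v)
    exact this.comp continuous_snd

lemma isCompact_markovSet :
    IsCompact {p : Ω₁ → Ω₂ → ℝ | IsMarkov p} := by
  refine IsCompact.of_isClosed_subset
    (isCompact_univ_pi fun x => isCompact_univ_pi fun y => isCompact_Icc (a := (0:ℝ)) (b := 1))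
    ?_ ?_
  · have : {p : Ω₁ → Ω₂ → ℝ | IsMarkov p}
        = (⋂ x, ⋂ y, {p : Ω₁ → Ω₂ → ℝ | 0 ≤ p x y}) ∩
          ⋂ y, {p : Ω₁ → Ω₂ → ℝ | ∑ x, p x y = 1} := by
      ext p
      simp [IsMarkov, Set.mem_iInter, forall_and]
    rw [this]
    refine IsClosed.inter ?_ ?_
    · refine isClosed_iInter fun x => isClosed_iInter fun y => ?_
      exact isClosed_le continuous_const ((continuous_apply y).comp (continuous_apply x))
    · refine isClosed_iInter fun y => ?_
      exact isClosed_eq (continuous_finset_sum _ fun x _ =>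
        (continuous_apply y).comp (continuous_apply x)) continuous_const
  · intro p hp
    simp only [Set.mem_univ_pi, Set.mem_Icc]
    intro x y
    refine ⟨hp.1 x y, ?_⟩
    calc p x y ≤ ∑ x', p x' y :=
          Finset.single_le_sum (fun x' _ => hp.1 x' y) (Finset.mem_univ x)
      _ = 1 := hp.2 y

end forms

end JointAux

namespace JointAux

local notation "⟪" x ", " y "⟫" => @inner ℂ _ _ x y

open ComplexConjugate

section cs

lemma effect_form_bound {B : H →L[ℂ] H} (hB : B.IsPositive)
    (hB1 : (1 - B).IsPositive) (v w : H) : ‖⟪v, B w⟫‖ ≤ ‖v‖ * ‖w‖ := by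
  have hsym : (B : H →ₗ[ℂ] H).IsSymmetric :=
    ContinuousLinearMap.isSelfAdjoint_iff_isSymmetric.mp hB.isSelfAdjoint
  have hsym' : ∀ x y : H, ⟪B x, y⟫ = ⟪x, B y⟫ := fun x y => hsym x y
  have hpos : ∀ u : H, 0 ≤ (⟪u, B u⟫).re := fun u => hB.re_inner_nonneg_right u
  have hdiag : ∀ u : H, (⟪u, B u⟫).re ≤ ‖u‖ ^ 2 := by
    intro u
    have h0 := hB1.re_inner_nonneg_right u
    simp only [RCLike.re_to_complex] at h0
    have h1 : (⟪u, (1 - B) u⟫).re = ‖u‖ ^ 2 - (⟪u, B u⟫).re := by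
      simp only [ContinuousLinearMap.sub_apply, ContinuousLinearMap.one_apply,
        inner_sub_right, Complex.sub_re]
      have h2 := @inner_self_eq_norm_sq ℂ H _ _ _ u
      simp only [RCLike.re_to_complex] at h2
      rw [h2]
    rw [h1] at h0
    linarith
  have key : ‖⟪v, B w⟫‖ ^ 2 ≤ (⟪v, B v⟫).re * (⟪w, B w⟫).re := by
    by_cases hc0 : ⟪v, B w⟫ = (0 : ℂ)
    · rw [hc0]; simpa using mul_nonneg (hpos v) (hpos w)
    · obtain ⟨s, hs⟩ : ∃ s : ℂ, s = (conj ⟪v, B w⟫) / (‖⟪v, B w⟫‖ : ℂ) := ⟨_, rfl⟩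
      obtain ⟨u, hu⟩ : ∃ u : H, u = s • w := ⟨_, rfl⟩
      have hns : ‖s‖ = 1 := by
        rw [hs, norm_div, RCLike.norm_conj, Complex.norm_real,
          Real.norm_of_nonneg (norm_nonneg _), div_self (norm_ne_zero_iff.mpr hc0)]
      have hss : s * conj s = 1 := by
        rw [Complex.mul_conj', hns]; norm_num
      have h1 : ⟪v, B u⟫ = (‖⟪v, B w⟫‖ : ℂ) := by
        rw [hu, map_smul, inner_smul_right, hs, div_mul_eq_mul_div, Complex.conj_mul',
          sq, mul_div_assoc, div_self (by simpa using norm_ne_zero_iff.mpr hc0), mul_one]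
      have h2 : ⟪u, B v⟫ = (‖⟪v, B w⟫‖ : ℂ) := by
        rw [← inner_conj_symm, hsym' v u, h1, Complex.conj_ofReal]
      have huu : (⟪u, B u⟫).re = (⟪w, B w⟫).re := by
        rw [hu, map_smul, inner_smul_right, inner_smul_left, ← mul_assoc, hss, one_mul]
      have quad : ∀ t : ℝ, 0 ≤ (⟪u, B u⟫).re * (t * t) + (2 * ‖⟪v, B w⟫‖) * t
          + (⟪v, B v⟫).re := by
        intro t
        have h0 := hB.re_inner_nonneg_right (v + (t : ℂ) • u)
        simp only [RCLike.re_to_complex] at h0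
        have hexpand : ⟪v + (t : ℂ) • u, B (v + (t : ℂ) • u)⟫
            = ⟪v, B v⟫ + ((t * t : ℝ) : ℂ) * ⟪u, B u⟫ + ((2 * t * ‖⟪v, B w⟫‖ : ℝ) : ℂ) := by
          simp only [map_add, map_smul, inner_add_left, inner_add_right, inner_smul_left,
            inner_smul_right, h1, h2, Complex.conj_ofReal]
          push_cast
          ring
        rw [hexpand] at h0
        simp only [Complex.add_re, Complex.re_ofReal_mul, Complex.ofReal_re] at h0
        linarith
      have hd := discrim_le_zero quad
      rw [discrim] at hd
      nlinarith [hd, huu, hpos u, hpos v, hpos w]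
  have h3 : (⟪v, B v⟫).re * (⟪w, B w⟫).re ≤ ‖v‖ ^ 2 * ‖w‖ ^ 2 :=
    mul_le_mul (hdiag v) (hdiag w) (hpos w) (by positivity)
  nlinarith [key, h3, norm_nonneg (⟪v, B w⟫), mul_nonneg (norm_nonneg v) (norm_nonneg w)]

end cs

end JointAux

namespace JointAux

local notation "⟪" x ", " y "⟫" => @inner ℂ _ _ x y

open ComplexConjugate

section sums

lemma isPositive_sum {ι : Type*} (s : Finset ι) (f : ι → H →L[ℂ] H)
    (h : ∀ i ∈ s, (f i).IsPositive) : (∑ i ∈ s, f i).IsPositive :=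
  Finset.sum_induction f _ (fun _ _ ha hb => ha.add hb)
    ContinuousLinearMap.isPositive_zero h

lemma isPositive_one_sub {Ω' : Type*} [Fintype Ω'] {B : Ω' → H →L[ℂ] H}
    (hB : IsObservable B) (x : Ω') : ((1 : H →L[ℂ] H) - B x).IsPositive := by
  classical
  have h : (1 : H →L[ℂ] H) - B x = ∑ y ∈ Finset.univ.erase x, B y := by
    rw [Finset.sum_erase_eq_sub (Finset.mem_univ x), hB.2]
  rw [h]
  exact isPositive_sum _ _ fun i _ => hB.1 i

end sums

section joint

variable {n : ℕ} {Ω : Fin n → Type*} [∀ ℓ, Fintype (Ω ℓ)] [∀ ℓ, DecidableEq (Ω ℓ)]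
variable (A : ∀ ℓ, Ω ℓ → H →L[ℂ] H)

/-- The set of joint observables, in the form picture. -/
def jointForms : Set ((∀ ℓ, Ω ℓ) → H → H → ℂ) := toForm '' {B | IsJoint A B}

/-- An explicit closed description of `jointForms`. -/
def conds : Set ((∀ ℓ, Ω ℓ) → H → H → ℂ) :=
  {f | ∀ x (v w w' : H), f x v (w + w') = f x v w + f x v w'} ∩
  {f | ∀ x (v w : H) (c : ℂ), f x v (c • w) = c * f x v w} ∩
  {f | ∀ x (v w : H), f x v w = conj (f x w v)} ∩
  {f | ∀ x (v w : H), ‖f x v w‖ ≤ ‖v‖ * ‖w‖} ∩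
  {f | ∀ x (v : H), 0 ≤ (f x v v).re} ∩
  {f | ∀ v w : H, ∑ x, f x v w = ⟪v, w⟫} ∩
  {f | ∀ ℓ xℓ (v w : H), (∑ x, if x ℓ = xℓ then f x v w else 0) = ⟪v, A ℓ xℓ w⟫}

lemma continuous_eval (x : ∀ ℓ, Ω ℓ) (v w : H) :
    Continuous fun f : (∀ ℓ, Ω ℓ) → H → H → ℂ => f x v w :=
  (continuous_apply w).comp (continuous_apply_apply x v)

lemma isClosed_conds : IsClosed (conds A) := by
  refine IsClosed.inter (IsClosed.inter (IsClosed.inter (IsClosed.inter (IsClosed.inter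
    (IsClosed.inter ?_ ?_) ?_) ?_) ?_) ?_) ?_
  · simp only [Set.setOf_forall]
    refine isClosed_iInter fun x => isClosed_iInter fun v =>
      isClosed_iInter fun w => isClosed_iInter fun w' => ?_
    exact isClosed_eq (continuous_eval x v (w + w'))
      ((continuous_eval x v w).add (continuous_eval x v w'))
  · simp only [Set.setOf_forall]
    refine isClosed_iInter fun x => isClosed_iInter fun v =>
      isClosed_iInter fun w => isClosed_iInter fun c => ?_
    exact isClosed_eq (continuous_eval x v (c • w)) (continuous_const.mul (continuous_eval x v w))
  · simp only [Set.setOf_forall]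
    refine isClosed_iInter fun x => isClosed_iInter fun v => isClosed_iInter fun w => ?_
    exact isClosed_eq (continuous_eval x v w) (Complex.continuous_conj.comp (continuous_eval x w v))
  · simp only [Set.setOf_forall]
    refine isClosed_iInter fun x => isClosed_iInter fun v => isClosed_iInter fun w => ?_
    exact isClosed_le (continuous_norm.comp (continuous_eval x v w)) continuous_const
  · simp only [Set.setOf_forall]
    refine isClosed_iInter fun x => isClosed_iInter fun v => ?_
    exact isClosed_le continuous_const (Complex.continuous_re.comp (continuous_eval x v v))
  · simp only [Set.setOf_forall]
    refine isClosed_iInter fun v => isClosed_iInter fun w => ?_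
    exact isClosed_eq (continuous_finset_sum _ fun x _ => continuous_eval x v w) continuous_const
  · simp only [Set.setOf_forall]
    refine isClosed_iInter fun ℓ => isClosed_iInter fun xℓ =>
      isClosed_iInter fun v => isClosed_iInter fun w => ?_
    refine isClosed_eq (continuous_finset_sum _ fun x _ => ?_) continuous_const
    by_cases h : x ℓ = xℓ <;> simp [h, continuous_eval, continuous_const]

lemma jointForms_subset_conds : jointForms A ⊆ conds A := by
  rintro f ⟨B, hB, rfl⟩
  have hsym : ∀ x, ((B x : H →L[ℂ] H) : H →ₗ[ℂ] H).IsSymmetric := fun x =>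
    ContinuousLinearMap.isSelfAdjoint_iff_isSymmetric.mp (hB.1.1 x).isSelfAdjoint
  refine ⟨⟨⟨⟨⟨⟨?_, ?_⟩, ?_⟩, ?_⟩, ?_⟩, ?_⟩, ?_⟩
  · intro x v w w'; simp [toForm, map_add, inner_add_right]
  · intro x v w c; simp [toForm, map_smul, inner_smul_right]
  · intro x v w
    have hsym' : ⟪B x v, w⟫ = ⟪v, B x w⟫ := hsym x v w
    show ⟪v, B x w⟫ = conj ⟪w, B x v⟫
    rw [inner_conj_symm]
    exact hsym'.symm
  · intro x v w
    exact effect_form_bound (hB.1.1 x) (isPositive_one_sub hB.1 x) v w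
  · intro x v
    have := (hB.1.1 x).re_inner_nonneg_right v
    simpa only [RCLike.re_to_complex, toForm] using this
  · intro v w
    show ∑ x, ⟪v, B x w⟫ = ⟪v, w⟫
    rw [← inner_sum]
    congr 1
    rw [show ∑ x, B x w = (∑ x, B x) w by rw [ContinuousLinearMap.sum_apply], hB.1.2]
    rfl
  · intro ℓ xℓ v w
    have h := hB.2 ℓ xℓ
    calc (∑ x, if x ℓ = xℓ then toForm B x v w else 0)
        = ∑ x, ⟪v, (if x ℓ = xℓ then B x else 0) w⟫ := by
          refine Finset.sum_congr rfl fun x _ => ?_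
          by_cases hx : x ℓ = xℓ <;> simp [hx, toForm]
      _ = ⟪v, (∑ x, if x ℓ = xℓ then B x else 0) w⟫ := by
          rw [ContinuousLinearMap.sum_apply, inner_sum]
      _ = ⟪v, A ℓ xℓ w⟫ := by rw [h]

lemma conds_subset_jointForms : conds A ⊆ jointForms A := by
  rintro f ⟨⟨⟨⟨⟨⟨h1, h2⟩, h3⟩, h4⟩, h5⟩, h6⟩, h7⟩
  -- construct the operators via Riesz representation
  have φdef : ∀ (x : ∀ ℓ, Ω ℓ) (w : H), ∃ φ : H →L[ℂ] ℂ, ∀ v, φ v = f x w v := by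
    intro x w
    refine ⟨LinearMap.mkContinuous
      { toFun := fun v => f x w v
        map_add' := fun v v' => h1 x w v v'
        map_smul' := fun c v => by simpa using h2 x w v c } ‖w‖
      (fun v => by simpa [mul_comm] using h4 x w v), fun v => rfl⟩
  choose φ hφ using φdef
  obtain ⟨T, hT⟩ : ∃ T : (∀ ℓ, Ω ℓ) → H → H, ∀ x w v, ⟪v, T x w⟫ = f x v w := by
    refine ⟨fun x w => (InnerProductSpace.toDual ℂ H).symm (φ x w), fun x w v => ?_⟩
    have h : ⟪(InnerProductSpace.toDual ℂ H).symm (φ x w), v⟫ = φ x w v :=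
      InnerProductSpace.toDual_symm_apply
    rw [← inner_conj_symm, h, hφ, ← h3]
  -- bound
  have hTb : ∀ x w, ‖T x w‖ ≤ ‖w‖ := by
    intro x w
    have h := h4 x (T x w) w
    have h' : ⟪T x w, T x w⟫ = f x (T x w) w := hT x w (T x w)
    have h'' : ‖T x w‖ ^ 2 = ‖f x (T x w) w‖ := by
      rw [← h', @inner_self_eq_norm_sq_to_K ℂ H _ _ _ (T x w)]
      simp [Complex.norm_real]
    nlinarith [norm_nonneg (T x w), norm_nonneg w]
  -- continuous linear maps
  obtain ⟨Top, hTop⟩ : ∃ Top : (∀ ℓ, Ω ℓ) → H →L[ℂ] H, ∀ x w, Top x w = T x w := by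
    refine ⟨fun x => LinearMap.mkContinuous
      { toFun := fun w => T x w
        map_add' := fun w w' => ext_inner_left ℂ fun v => by
          rw [hT, inner_add_right, hT, hT, h1]
        map_smul' := fun c w => ext_inner_left ℂ fun v => by
          rw [hT]
          simp only [RingHom.id_apply]
          rw [inner_smul_right, hT, h2] } 1
      (fun w => by simpa using hTb x w), fun x w => rfl⟩
  have hTopInner : ∀ x w v, ⟪v, Top x w⟫ = f x v w := by
    intro x w v; rw [hTop]; exact hT x w v
  refine ⟨Top, ⟨⟨fun x => ?_, ?_⟩, ?_⟩, ?_⟩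
  · -- positive
    constructor
    · refine fun u v => ?_
      show ⟪Top x u, v⟫ = ⟪u, Top x v⟫
      rw [← inner_conj_symm, hTopInner, ← h3, hTopInner]
    · intro v
      show 0 ≤ RCLike.re ⟪Top x v, v⟫
      rw [← inner_conj_symm, hTopInner]
      simpa only [RCLike.re_to_complex, Complex.conj_re] using h5 x v
  · -- sums to 1
    refine ContinuousLinearMap.ext fun w => ext_inner_left ℂ fun v => ?_
    rw [ContinuousLinearMap.sum_apply, inner_sum]
    simp only [hTopInner]
    rw [h6]
    simp
  · -- margins
    intro ℓ xℓ
    refine ContinuousLinearMap.ext fun w => ext_inner_left ℂ fun v => ?_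
    rw [ContinuousLinearMap.sum_apply, inner_sum]
    have : ∀ x : ∀ ℓ, Ω ℓ, ⟪v, (if x ℓ = xℓ then Top x else 0) w⟫
        = if x ℓ = xℓ then f x v w else 0 := by
      intro x
      by_cases hx : x ℓ = xℓ <;> simp [hx, hTopInner]
    simp only [this]
    rw [h7]
  · funext x v w
    exact hTopInner x w v

lemma jointForms_eq_conds : jointForms A = conds A :=
  le_antisymm (jointForms_subset_conds A) (conds_subset_jointForms A)

lemma isCompact_jointForms : IsCompact (jointForms A) := by
  rw [jointForms_eq_conds]
  refine IsCompact.of_isClosed_subset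
    (isCompact_univ_pi fun x => isCompact_univ_pi fun v => isCompact_univ_pi fun w =>
      isCompact_closedBall (0 : ℂ) (‖v‖ * ‖w‖))
    (isClosed_conds A) ?_
  intro f hf
  simp only [Set.mem_univ_pi]
  intro x v w
  simpa [Metric.mem_closedBall, dist_zero_right] using hf.1.1.1.2 x v w

lemma isClosed_jointForms : IsClosed (jointForms A) := by
  rw [jointForms_eq_conds]; exact isClosed_conds A

end joint

end JointAux


open JointAux in
/-- Every joint observable is lower bounded by a minimal joint observable and upper
bounded by a maximal joint observable in the post-processing order. -/
theorem joint_bounded_by_minimal_and_maximal {n : ℕ} {Ω : Fin n → Type*}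
    [∀ ℓ, Fintype (Ω ℓ)] [∀ ℓ, DecidableEq (Ω ℓ)]
    (A : ∀ ℓ, Ω ℓ → H →L[ℂ] H) (G : (∀ ℓ, Ω ℓ) → H →L[ℂ] H)
    (hG : IsJoint A G) :
    (∃ M : (∀ ℓ, Ω ℓ) → H →L[ℂ] H, IsJoint A M ∧ PP M G ∧
      ∀ G' : (∀ ℓ, Ω ℓ) → H →L[ℂ] H, IsJoint A G' → PP G' M → PP M G') ∧
    (∃ M : (∀ ℓ, Ω ℓ) → H →L[ℂ] H, IsJoint A M ∧ PP G M ∧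
      ∀ G' : (∀ ℓ, Ω ℓ) → H →L[ℂ] H, IsJoint A G' → PP M G' → PP G' M) := by
  classical
  constructor
  · -- minimal lower bound
    let S := {y : (∀ ℓ, Ω ℓ) → H →L[ℂ] H // IsJoint A y ∧ PP y G}
    let Z : S → Set ((∀ ℓ, Ω ℓ) → H → H → ℂ) := fun a =>
      ((fun p => kproc p (toForm a.1)) '' {p : (∀ ℓ, Ω ℓ) → (∀ ℓ, Ω ℓ) → ℝ | IsMarkov p}) ∩
        jointForms A
    have hZc : ∀ a, IsCompact (Z a) := fun a =>
      (isCompact_markovSet.image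
        (continuous_kproc.comp (continuous_id.prodMk continuous_const))).inter_right
        (isClosed_jointForms A)
    have hZcl : ∀ a, IsClosed (Z a) := fun a => (hZc a).isClosed
    have hZne : ∀ a, (Z a).Nonempty := by
      intro a
      refine ⟨toForm a.1, ⟨idk _, isMarkov_idk, ?_⟩, ⟨a.1, a.2.1, rfl⟩⟩
      show kproc (idk _) (toForm a.1) = toForm a.1
      rw [← toForm_pproc, pproc_idk]
    have hZmem : ∀ a (f : (∀ ℓ, Ω ℓ) → H → H → ℂ), f ∈ Z a →
        ∃ M, IsJoint A M ∧ f = toForm M ∧ PP M a.1 := by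
      rintro a f ⟨⟨p, hp, hpf⟩, B, hBJ, hBf⟩
      refine ⟨B, hBJ, hBf.symm, p, hp, toForm_injective ?_⟩
      rw [hBf, ← hpf, toForm_pproc]
    have hmono : ∀ a b : S, PP a.1 b.1 → Z a ⊆ Z b := by
      rintro a b ⟨q, hq, hab⟩ f ⟨⟨p, hp, hpf⟩, hfJ⟩
      refine ⟨⟨kcomp p q, isMarkov_kcomp hp hq, ?_⟩, hfJ⟩
      show kproc (kcomp p q) (toForm b.1) = f
      rw [← kproc_kproc, ← toForm_pproc, ← hab]
      exact hpf
    have hbdd : ∀ c : Set S, IsChain (fun a b : S => PP b.1 a.1) c →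
        ∃ ub : S, ∀ a ∈ c, PP ub.1 a.1 := by
      intro c hc
      by_cases hne : c.Nonempty
      swap
      · exact ⟨⟨G, hG, PP.refl G⟩, fun a ha => (hne ⟨a, ha⟩).elim⟩
      · haveI : Nonempty c := hne.to_subtype
        have hdir : Directed (· ⊇ ·) (fun a : c => Z a.1) := by
          intro x y
          by_cases hxy : x.1 = y.1
          · refine ⟨x, le_refl _, ?_⟩
            show Z y.1 ⊇ Z x.1
            rw [hxy]
          · rcases hc x.2 y.2 hxy with h | h
            · exact ⟨y, hmono y.1 x.1 h, le_refl _⟩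
            · exact ⟨x, le_refl _, hmono x.1 y.1 h⟩
        obtain ⟨f, hf⟩ := IsCompact.nonempty_iInter_of_directed_nonempty_isCompact_isClosed
          (fun a : c => Z a.1) hdir (fun a => hZne a.1) (fun a => hZc a.1) (fun a => hZcl a.1)
        simp only [Set.mem_iInter] at hf
        obtain ⟨a₀⟩ := ‹Nonempty c›
        obtain ⟨M, hMJ, hfM, hMa₀⟩ := hZmem a₀.1 f (hf a₀)
        have hMG : PP M G := PP.trans hMa₀ a₀.1.2.2
        refine ⟨⟨M, hMJ, hMG⟩, fun a ha => ?_⟩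
        obtain ⟨M', hM'J, hfM', hM'a⟩ := hZmem a f (hf ⟨a, ha⟩)
        have : M' = M := toForm_injective (hfM'.symm.trans hfM)
        exact this ▸ hM'a
    obtain ⟨m, hm⟩ := exists_maximal_of_chains_bounded
      (r := fun a b : S => PP b.1 a.1) hbdd (fun h₁ h₂ => PP.trans h₂ h₁)
    exact ⟨m.1, m.2.1, m.2.2,
      fun G' hG' hPP => hm ⟨G', hG', PP.trans hPP m.2.2⟩ hPP⟩
  · -- maximal upper bound
    let S := {y : (∀ ℓ, Ω ℓ) → H →L[ℂ] H // IsJoint A y ∧ PP G y}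
    let Z : S → Set ((∀ ℓ, Ω ℓ) → H → H → ℂ) := fun a =>
      (fun q : ((∀ ℓ, Ω ℓ) → (∀ ℓ, Ω ℓ) → ℝ) × ((∀ ℓ, Ω ℓ) → H → H → ℂ) => q.2) ''
        (({p | IsMarkov p} ×ˢ jointForms A) ∩ {q | kproc q.1 q.2 = toForm a.1})
    have hZc : ∀ a, IsCompact (Z a) := fun a =>
      (((isCompact_markovSet.prod (isCompact_jointForms A)).inter_right
        (isClosed_eq continuous_kproc continuous_const)).image continuous_snd)
    have hZcl : ∀ a, IsClosed (Z a) := fun a => (hZc a).isClosed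
    have hZne : ∀ a, (Z a).Nonempty := by
      intro a
      refine ⟨toForm a.1, ⟨(idk _, toForm a.1), ⟨⟨isMarkov_idk, ⟨a.1, a.2.1, rfl⟩⟩, ?_⟩, rfl⟩⟩
      show kproc (idk _) (toForm a.1) = toForm a.1
      rw [← toForm_pproc, pproc_idk]
    have hZmem : ∀ a (f : (∀ ℓ, Ω ℓ) → H → H → ℂ), f ∈ Z a →
        ∃ M, IsJoint A M ∧ f = toForm M ∧ PP a.1 M := by
      rintro a f ⟨⟨p, g⟩, ⟨⟨hp, B, hBJ, hBg⟩, hpg⟩, rfl⟩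
      refine ⟨B, hBJ, hBg.symm, p, hp, toForm_injective ?_⟩
      rw [toForm_pproc, hBg, hpg]
    have hmono : ∀ a b : S, PP a.1 b.1 → Z b ⊆ Z a := by
      rintro a b ⟨q, hq, hab⟩ f ⟨⟨p, g⟩, ⟨⟨hp, hgJ⟩, hpg⟩, rfl⟩
      refine ⟨(kcomp q p, g), ⟨⟨isMarkov_kcomp hq hp, hgJ⟩, ?_⟩, rfl⟩
      show kproc (kcomp q p) g = toForm a.1
      rw [← kproc_kproc, hpg, ← toForm_pproc, ← hab]
    have hbdd : ∀ c : Set S, IsChain (fun a b : S => PP a.1 b.1) c →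
        ∃ ub : S, ∀ a ∈ c, PP a.1 ub.1 := by
      intro c hc
      by_cases hne : c.Nonempty
      swap
      · exact ⟨⟨G, hG, PP.refl G⟩, fun a ha => (hne ⟨a, ha⟩).elim⟩
      · haveI : Nonempty c := hne.to_subtype
        have hdir : Directed (· ⊇ ·) (fun a : c => Z a.1) := by
          intro x y
          by_cases hxy : x.1 = y.1
          · refine ⟨x, le_refl _, ?_⟩
            show Z y.1 ⊇ Z x.1
            rw [hxy]
          · rcases hc x.2 y.2 hxy with h | h
            · exact ⟨y, hmono x.1 y.1 h, le_refl _⟩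
            · exact ⟨x, le_refl _, hmono y.1 x.1 h⟩
        obtain ⟨f, hf⟩ := IsCompact.nonempty_iInter_of_directed_nonempty_isCompact_isClosed
          (fun a : c => Z a.1) hdir (fun a => hZne a.1) (fun a => hZc a.1) (fun a => hZcl a.1)
        simp only [Set.mem_iInter] at hf
        obtain ⟨a₀⟩ := ‹Nonempty c›
        obtain ⟨M, hMJ, hfM, hMa₀⟩ := hZmem a₀.1 f (hf a₀)
        have hGM : PP G M := PP.trans a₀.1.2.2 hMa₀
        refine ⟨⟨M, hMJ, hGM⟩, fun a ha => ?_⟩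
        obtain ⟨M', hM'J, hfM', hM'a⟩ := hZmem a f (hf ⟨a, ha⟩)
        have : M' = M := toForm_injective (hfM'.symm.trans hfM)
        exact this ▸ hM'a
    obtain ⟨m, hm⟩ := exists_maximal_of_chains_bounded
      (r := fun a b : S => PP a.1 b.1) hbdd (fun h₁ h₂ => PP.trans h₁ h₂)
    exact ⟨m.1, m.2.1, m.2.2,
      fun G' hG' hPP => hm ⟨G', hG', PP.trans m.2.2 hPP⟩ hPP⟩
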